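/- arXiv:1305.0867 — 4 statements merged into one kernel-verified Lean document; each statement's English description precedes it below -/
import Mathlib

section
/- Let n ≥ 2, let 0 ≤ j ≤ n-2, let m be a positive integer, and let z_0 ≠ 0 be a periodic point of minimal period m of the map p_0(z) = z^n. For t ∈ ℂ set p_t(z) = z^n + t·z^j. Suppose w is an analytic function on a neighborhood V of 0 in ℂ with w(0) = z_0 and p_t^{∘m}(w(t)) = w(t) for all t ∈ V, and define λ(t) = (p_t^{∘m})'(w(t)). Then λ'(0) = (j·n^{m-1} - n^m) · Σ_{i=0}^{m-1} (z_0^{-1})^{n^i(n-j)}. -/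
lemma iterDiff (n j : ℕ) (t : ℂ) (k : ℕ) :
    Differentiable ℂ ((fun z : ℂ => z ^ n + t * z ^ j)^[k]) := by
  induction k with
  | zero => simpa using differentiable_id
  | succ k ih =>
    rw [Function.iterate_succ']
    exact ((differentiable_pow n).add ((differentiable_const t).mul (differentiable_pow j))).comp ih

lemma iterDeriv (n j : ℕ) (t : ℂ) (k : ℕ) (z : ℂ) :
    deriv ((fun z : ℂ => z ^ n + t * z ^ j)^[k]) z =
      ∏ i ∈ Finset.range k, ((n : ℂ) * (((fun z : ℂ => z ^ n + t * z ^ j)^[i]) z) ^ (n - 1)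
        + t * ((j : ℂ) * (((fun z : ℂ => z ^ n + t * z ^ j)^[i]) z) ^ (j - 1))) := by
  induction k with
  | zero => simp
  | succ k ih =>
    rw [Function.iterate_succ', Finset.prod_range_succ, ← ih]
    have hd : ∀ w : ℂ, HasDerivAt (fun z : ℂ => z ^ n + t * z ^ j)
        ((n : ℂ) * w ^ (n - 1) + t * ((j : ℂ) * w ^ (j - 1))) w := fun w =>
      (hasDerivAt_pow n w).add ((hasDerivAt_pow j w).const_mul t)
    rw [deriv_comp z ((hd _).differentiableAt) ((iterDiff n j t k) z), (hd _).deriv, mul_comm]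

/-- derivative of the multiplier `λ(t) = (p_t^{∘m})'(w(t))` of the
analytically continued periodic point `w(t)` of `p_t(z) = zⁿ + t z^j` at `t = 0`:
`λ'(0) = (j n^{m-1} - n^m) Σ_{i<m} (z₀⁻¹)^{nⁱ(n-j)}`. -/
theorem multiplier_derivative
    (n : ℕ) (hn : 2 ≤ n) (j : ℕ) (hj : j ≤ n - 2) (m : ℕ) (hm : 0 < m)
    (z₀ : ℂ) (hz₀ : z₀ ≠ 0)
    (hminper : Function.minimalPeriod (fun z : ℂ => z ^ n) z₀ = m)
    (V : Set ℂ) (hV : IsOpen V) (h0V : (0 : ℂ) ∈ V)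
    (w : ℂ → ℂ) (hw : ∀ t ∈ V, AnalyticAt ℂ w t) (hw0 : w 0 = z₀)
    (hper : ∀ t ∈ V, (fun z : ℂ => z ^ n + t * z ^ j)^[m] (w t) = w t) :
    deriv (fun t => deriv ((fun z : ℂ => z ^ n + t * z ^ j)^[m]) (w t)) 0 =
      ((j : ℂ) * (n : ℂ) ^ (m - 1) - (n : ℂ) ^ m) *
        ∑ i ∈ Finset.range m, (z₀⁻¹) ^ (n ^ i * (n - j)) := by
  have hn0 : (n : ℂ) ≠ 0 := Nat.cast_ne_zero.mpr (by omega)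
  have hjn : j ≤ n := by omega
  set y : ℕ → ℂ → ℂ := fun i t => (fun z : ℂ => z ^ n + t * z ^ j)^[i] (w t) with hy
  have hysucc : ∀ i, y (i + 1) = fun t => (y i t) ^ n + t * (y i t) ^ j := fun i =>
    funext fun t => by simp only [hy, Function.iterate_succ_apply']
  set c : ℕ → ℂ := fun i => z₀ ^ (n ^ i) with hc
  have hcne : ∀ i, c i ≠ 0 := fun i => pow_ne_zero _ hz₀
  -- z₀ is periodic
  have hz₀m : z₀ ^ (n ^ m) = z₀ := by
    have h := Function.iterate_minimalPeriod (f := fun z : ℂ => z ^ n) (x := z₀)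
    rwa [hminper, pow_iterate] at h
  have h1nm : 1 ≤ n ^ m := Nat.one_le_pow _ _ (by omega)
  have hz1 : z₀ ^ (n ^ m - 1) = 1 := by
    have h2 : z₀ ^ (n ^ m - 1) * z₀ = 1 * z₀ := by
      rw [one_mul, ← pow_succ, Nat.sub_add_cancel h1nm, hz₀m]
    exact mul_right_cancel₀ hz₀ h2
  have hzm : z₀ ^ ((n : ℤ) ^ m - 1) = 1 := by
    rw [show ((n : ℤ) ^ m - 1) = ((n ^ m - 1 : ℕ) : ℤ) by push_cast [Nat.cast_sub h1nm]; ring,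
      zpow_natCast, hz1]
  -- differentiability and values along the orbit
  have hkey : ∀ i, DifferentiableAt ℂ (y i) 0 ∧ y i 0 = c i := by
    intro i
    induction i with
    | zero =>
      refine ⟨(hw 0 h0V).differentiableAt, ?_⟩
      simp [hy, hc, hw0]
    | succ i ih =>
      rw [hysucc i]
      refine ⟨(ih.1.pow n).add (differentiableAt_id.mul (ih.1.pow j)), ?_⟩
      simp only [ih.2, hc, ← pow_mul, ← pow_succ]
      ring
  set d : ℕ → ℂ := fun i => deriv (y i) 0 with hd
  have hdrec : ∀ i, d (i + 1) = (n : ℂ) * (c i) ^ (n - 1) * d i + (c i) ^ j := by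
    intro i
    have h1 : HasDerivAt (y (i + 1))
        ((n : ℂ) * (y i 0) ^ (n - 1) * d i + (1 * (y i 0) ^ j +
          0 * ((j : ℂ) * (y i 0) ^ (j - 1) * d i))) 0 := by
      rw [hysucc i]
      exact ((hkey i).1.hasDerivAt.pow n).add ((hasDerivAt_id 0).mul ((hkey i).1.hasDerivAt.pow j))
    rw [show d (i + 1) = deriv (y (i + 1)) 0 from rfl, h1.deriv, (hkey i).2]
    ring
  have hdm : d m = d 0 := by
    have hev : y m =ᶠ[nhds 0] y 0 :=
      Filter.eventuallyEq_of_mem (hV.mem_nhds h0V) (fun t ht => by simpa [hy] using hper t ht)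
    exact hev.deriv_eq
  set a : ℕ → ℂ := fun i => z₀ ^ (-((n : ℤ) ^ i * ((n : ℤ) - (j : ℤ)))) with haa
  set e : ℕ → ℂ := fun i => z₀ ^ (1 - (n : ℤ) ^ i) * d i with hee
  have hcomb : ∀ A B : ℤ, z₀ ^ A * z₀ ^ B = z₀ ^ (A + B) := fun A B => (zpow_add₀ hz₀ A B).symm
  have hcz : ∀ (i K : ℕ), c i ^ K = z₀ ^ ((n : ℤ) ^ i * (K : ℤ)) := by
    intro i K
    show (z₀ ^ n ^ i) ^ K = _
    rw [← pow_mul, ← zpow_natCast]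
    congr 1
  have herec : ∀ i, e (i + 1) = (n : ℂ) * e i + z₀ * a i := by
    intro i
    show z₀ ^ (1 - (n : ℤ) ^ (i + 1)) * d (i + 1) = _
    rw [hdrec i, hcz i (n - 1), hcz i j,
      show ((n - 1 : ℕ) : ℤ) = (n : ℤ) - 1 from by push_cast [Nat.cast_sub (by omega : 1 ≤ n)]; ring,
      mul_add]
    congr 1
    · calc z₀ ^ (1 - (n : ℤ) ^ (i + 1)) * ((n : ℂ) * z₀ ^ ((n : ℤ) ^ i * ((n : ℤ) - 1)) * d i)
          = (n : ℂ) * ((z₀ ^ (1 - (n : ℤ) ^ (i + 1)) * z₀ ^ ((n : ℤ) ^ i * ((n : ℤ) - 1))) * d i) := by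
            ring
        _ = (n : ℂ) * e i := by
            rw [hcomb, show (1 - (n : ℤ) ^ (i + 1) + (n : ℤ) ^ i * ((n : ℤ) - 1)) = 1 - (n : ℤ) ^ i
              from by ring]
    · rw [hcomb, show (1 - (n : ℤ) ^ (i + 1) + (n : ℤ) ^ i * (j : ℤ))
        = 1 + -((n : ℤ) ^ i * ((n : ℤ) - (j : ℤ))) from by ring, zpow_add₀ hz₀, zpow_one]
  have hem : e m = e 0 := by
    show z₀ ^ (1 - (n : ℤ) ^ m) * d m = z₀ ^ (1 - (n : ℤ) ^ 0) * d 0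
    rw [hdm, show (1 - (n : ℤ) ^ m) = -((n : ℤ) ^ m - 1) from by ring, zpow_neg, hzm, inv_one]
    norm_num
  have hsum : ((n : ℂ) - 1) * (∑ i ∈ Finset.range m, e i)
      = -(z₀ * ∑ i ∈ Finset.range m, a i) := by
    have htel : ∑ i ∈ Finset.range m, (((n : ℂ) - 1) * e i + z₀ * a i) = 0 := by
      calc ∑ i ∈ Finset.range m, (((n : ℂ) - 1) * e i + z₀ * a i)
          = ∑ i ∈ Finset.range m, (e (i + 1) - e i) :=
            Finset.sum_congr rfl fun i _ => by rw [herec i]; ring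
        _ = e m - e 0 := Finset.sum_range_sub e m
        _ = 0 := by rw [hem]; ring
    rw [Finset.sum_add_distrib, ← Finset.mul_sum, ← Finset.mul_sum] at htel
    linear_combination htel
  -- multiplier as a product over the orbit
  have hlam : (fun t => deriv ((fun z : ℂ => z ^ n + t * z ^ j)^[m]) (w t))
      = fun t => ∏ i ∈ Finset.range m,
          ((n : ℂ) * (y i t) ^ (n - 1) + t * ((j : ℂ) * (y i t) ^ (j - 1))) :=
    funext fun t => iterDeriv n j t m (w t)
  have hgder : ∀ i, HasDerivAt
      (fun t => (n : ℂ) * (y i t) ^ (n - 1) + t * ((j : ℂ) * (y i t) ^ (j - 1)))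
      ((n : ℂ) * (((n - 1 : ℕ) : ℂ) * c i ^ (n - 1 - 1) * d i) + (j : ℂ) * c i ^ (j - 1)) 0 := by
    intro i
    have h1 := (hkey i).1.hasDerivAt
    have h2 := ((h1.pow (n - 1)).const_mul (n : ℂ)).fun_add
      ((hasDerivAt_id 0).fun_mul ((h1.pow (j - 1)).const_mul (j : ℂ)))
    simpa [(hkey i).2] using h2
  have hderiv0 : deriv (fun t => ∏ i ∈ Finset.range m,
        ((n : ℂ) * (y i t) ^ (n - 1) + t * ((j : ℂ) * (y i t) ^ (j - 1)))) 0
      = ∑ i ∈ Finset.range m,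
          (∏ k ∈ (Finset.range m).erase i,
            ((n : ℂ) * (y k 0) ^ (n - 1) + 0 * ((j : ℂ) * (y k 0) ^ (j - 1)))) •
          ((n : ℂ) * (((n - 1 : ℕ) : ℂ) * c i ^ (n - 1 - 1) * d i) + (j : ℂ) * c i ^ (j - 1)) :=
    HasDerivAt.deriv (by exact HasDerivAt.fun_finsetProd (fun i _ => hgder i))
  have hy0 : ∀ k, y k 0 = c k := fun k => (hkey k).2
  simp only [hy0, zero_mul, add_zero, smul_eq_mul] at hderiv0
  rw [hlam, hderiv0]
  -- evaluate the erased products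
  have hnat : (∑ k ∈ Finset.range m, n ^ k * (n - 1)) = n ^ m - 1 := by
    have hcast : ((∑ k ∈ Finset.range m, n ^ k * (n - 1) : ℕ) : ℤ) = ((n ^ m - 1 : ℕ) : ℤ) := by
      push_cast [Nat.cast_sub (by omega : 1 ≤ n), Nat.cast_sub h1nm]
      rw [← Finset.sum_mul]
      exact geom_sum_mul (n : ℤ) m
    exact_mod_cast hcast
  have hprodall : ∏ k ∈ Finset.range m, ((n : ℂ) * c k ^ (n - 1)) = (n : ℂ) ^ m := by
    rw [Finset.prod_mul_distrib, Finset.prod_const, Finset.card_range]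
    have h3 : ∏ k ∈ Finset.range m, c k ^ (n - 1) = 1 := by
      have h4 : ∏ k ∈ Finset.range m, c k ^ (n - 1)
          = z₀ ^ (∑ k ∈ Finset.range m, n ^ k * (n - 1)) := by
        simp only [hc, ← pow_mul]
        exact Finset.prod_pow_eq_pow_sum _ _ _
      rw [h4, hnat, hz1]
    rw [h3, mul_one]
  have hmm1 : (n : ℂ) ^ m = (n : ℂ) * (n : ℂ) ^ (m - 1) := by
    rw [← pow_succ']
    congr 1
    omega
  have herase : ∀ i ∈ Finset.range m, ∏ k ∈ (Finset.range m).erase i, ((n : ℂ) * c k ^ (n - 1))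
      = (n : ℂ) ^ (m - 1) * z₀ ^ (-((n : ℤ) ^ i * ((n : ℤ) - 1))) := by
    intro i hi
    have hne : (n : ℂ) * c i ^ (n - 1) ≠ 0 := mul_ne_zero hn0 (pow_ne_zero _ (hcne i))
    apply mul_left_cancel₀ hne
    rw [Finset.mul_prod_erase (Finset.range m) (fun k => (n : ℂ) * c k ^ (n - 1)) hi, hprodall,
      hcz i (n - 1),
      show ((n - 1 : ℕ) : ℤ) = (n : ℤ) - 1 from by
        push_cast [Nat.cast_sub (by omega : 1 ≤ n)]; ring]
    calc (n : ℂ) ^ m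
        = ((n : ℂ) * (n : ℂ) ^ (m - 1)) *
            (z₀ ^ ((n : ℤ) ^ i * ((n : ℤ) - 1)) * z₀ ^ (-((n : ℤ) ^ i * ((n : ℤ) - 1)))) := by
          rw [hcomb, show ((n : ℤ) ^ i * ((n : ℤ) - 1) + -((n : ℤ) ^ i * ((n : ℤ) - 1))) = 0
            from by ring, zpow_zero, mul_one, hmm1]
      _ = (n : ℂ) * z₀ ^ ((n : ℤ) ^ i * ((n : ℤ) - 1)) *
            ((n : ℂ) ^ (m - 1) * z₀ ^ (-((n : ℤ) ^ i * ((n : ℤ) - 1)))) := by ring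
  -- per-term zpow computations
  have ht1 : ∀ i, z₀ ^ (-((n : ℤ) ^ i * ((n : ℤ) - 1))) * (c i ^ (n - 1 - 1) * d i)
      = z₀⁻¹ * e i := by
    intro i
    show _ = z₀⁻¹ * (z₀ ^ (1 - (n : ℤ) ^ i) * d i)
    rw [hcz i (n - 1 - 1), show n - 1 - 1 = n - 2 from by omega,
      show ((n - 2 : ℕ) : ℤ) = (n : ℤ) - 2 from by push_cast [Nat.cast_sub hn]; ring,
      show z₀⁻¹ = z₀ ^ (-1 : ℤ) from by rw [zpow_neg, zpow_one],
      ← mul_assoc, ← mul_assoc, hcomb, hcomb,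
      show (-((n : ℤ) ^ i * ((n : ℤ) - 1)) + (n : ℤ) ^ i * ((n : ℤ) - 2))
        = (-1 + (1 - (n : ℤ) ^ i)) from by ring]
  have ht2 : ∀ i, (j : ℂ) * (z₀ ^ (-((n : ℤ) ^ i * ((n : ℤ) - 1))) * c i ^ (j - 1))
      = (j : ℂ) * a i := by
    intro i
    rcases Nat.eq_zero_or_pos j with h0 | h0
    · simp [h0]
    · rw [hcz i (j - 1), show ((j - 1 : ℕ) : ℤ) = (j : ℤ) - 1 from by
        push_cast [Nat.cast_sub h0]; ring, hcomb,
        show (-((n : ℤ) ^ i * ((n : ℤ) - 1)) + (n : ℤ) ^ i * ((j : ℤ) - 1))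
          = -((n : ℤ) ^ i * ((n : ℤ) - (j : ℤ))) from by ring]
  have hterm : ∀ i ∈ Finset.range m,
      (∏ k ∈ (Finset.range m).erase i, ((n : ℂ) * c k ^ (n - 1))) *
        ((n : ℂ) * (((n - 1 : ℕ) : ℂ) * c i ^ (n - 1 - 1) * d i) + (j : ℂ) * c i ^ (j - 1))
      = (n : ℂ) ^ (m - 1) * ((n : ℂ) * ((n : ℂ) - 1) * (z₀⁻¹ * e i) + (j : ℂ) * a i) := by
    intro i hi
    rw [herase i hi, show ((n - 1 : ℕ) : ℂ) = (n : ℂ) - 1 from by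
      push_cast [Nat.cast_sub (by omega : 1 ≤ n)]; ring]
    calc ((n : ℂ) ^ (m - 1) * z₀ ^ (-((n : ℤ) ^ i * ((n : ℤ) - 1)))) *
          ((n : ℂ) * (((n : ℂ) - 1) * c i ^ (n - 1 - 1) * d i) + (j : ℂ) * c i ^ (j - 1))
        = (n : ℂ) ^ (m - 1) * ((n : ℂ) * ((n : ℂ) - 1) *
            (z₀ ^ (-((n : ℤ) ^ i * ((n : ℤ) - 1))) * (c i ^ (n - 1 - 1) * d i)) +
            (j : ℂ) * (z₀ ^ (-((n : ℤ) ^ i * ((n : ℤ) - 1))) * c i ^ (j - 1))) := by ring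
      _ = _ := by rw [ht1 i, ht2 i]
  rw [Finset.sum_congr rfl hterm,
    show ∑ i ∈ Finset.range m, (z₀⁻¹) ^ (n ^ i * (n - j)) = ∑ i ∈ Finset.range m, a i from
      Finset.sum_congr rfl fun i _ => by
        rw [inv_pow, ← zpow_natCast, ← zpow_neg]
        congr 1
        push_cast [Nat.cast_sub hjn]
        ring]
  -- final algebra
  have hstep : ∑ i ∈ Finset.range m,
      (n : ℂ) ^ (m - 1) * ((n : ℂ) * ((n : ℂ) - 1) * (z₀⁻¹ * e i) + (j : ℂ) * a i)
      = ((n : ℂ) ^ (m - 1) * (n : ℂ) * ((n : ℂ) - 1) * z₀⁻¹) * (∑ i ∈ Finset.range m, e i)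
        + ((n : ℂ) ^ (m - 1) * (j : ℂ)) * (∑ i ∈ Finset.range m, a i) := by
    calc ∑ i ∈ Finset.range m,
        (n : ℂ) ^ (m - 1) * ((n : ℂ) * ((n : ℂ) - 1) * (z₀⁻¹ * e i) + (j : ℂ) * a i)
        = ∑ i ∈ Finset.range m, (((n : ℂ) ^ (m - 1) * (n : ℂ) * ((n : ℂ) - 1) * z₀⁻¹) * e i
            + ((n : ℂ) ^ (m - 1) * (j : ℂ)) * a i) :=
          Finset.sum_congr rfl fun i _ => by ring
      _ = _ := by rw [Finset.sum_add_distrib, ← Finset.mul_sum, ← Finset.mul_sum]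
  rw [hstep]
  have hzz : z₀⁻¹ * z₀ = 1 := inv_mul_cancel₀ hz₀
  linear_combination ((n : ℂ) ^ (m - 1) * (n : ℂ) * z₀⁻¹) * hsum +
    (-((n : ℂ) ^ (m - 1) * (n : ℂ) * ∑ i ∈ Finset.range m, a i)) * hzz +
    (∑ i ∈ Finset.range m, a i) * hmm1
end

section
/- Let q be a polynomial of degree n ≥ 2, let m be a positive integer and let 0 ≤ j be an integer. Let w_0, w_1, …, w_{m-1} ∈ ℂ be a periodic orbit of q of period m (so w_{i+1} = q(w_i) with indices taken mod m, and the points w_0, …, w_{m-1} are distinct), and assume the multiplier Π_{s=0}^{m-1} q'(w_s) ≠ 1. For t ∈ ℂ set p_t(z) = q(z) + t·z^j. Suppose w_0(t), …, w_{m-1}(t) are functions analytic on a neighborhood of 0 in ℂ, differentiable at 0, with w_i(0) = w_i and w_{i+1}(t) = p_t(w_i(t)) for all t (indices mod m). Then for every i, (d/dt)w_i(t)|_{t=0} = [ Σ_{s=0}^{m-1} w_{i+s}^j · Π_{r=s+1}^{m-1} q'(w_{i+r}) ] / [ 1 - Π_{s=0}^{m-1} q'(w_{i+s}) ], where all orbit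 indices are taken modulo m. -/
/-- Shifting the starting index of a product over one full period does not
change the product, when the underlying sequence is `m`-periodic. -/
lemma prod_shift_periodic (m : ℕ) (w : ℕ → ℂ)
    (hwper : ∀ i, w (i + m) = w i) (f : ℂ → ℂ) :
    ∀ i, ∏ s ∈ Finset.range m, f (w (i + s)) = ∏ s ∈ Finset.range m, f (w s) := by
  intro i
  induction i with
  | zero => simp
  | succ i ih =>
    rw [← ih]
    have h1 : ∏ s ∈ Finset.range m, f (w (i + s)) = ∏ s ∈ Finset.Ico i (i + m), f (w s) := by
      rw [Finset.prod_Ico_eq_prod_range]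
      simp
    have h2 : ∏ s ∈ Finset.range m, f (w (i + 1 + s)) =
        ∏ s ∈ Finset.Ico (i + 1) (i + 1 + m), f (w s) := by
      rw [Finset.prod_Ico_eq_prod_range]
      simp
    rw [h1, h2]
    rcases Nat.eq_zero_or_pos m with hm0 | hm0
    · simp [hm0]
    have e1 := Finset.prod_eq_prod_Ico_succ_bot (by omega : i < i + m)
      (fun s => f (w s))
    have e2 : ∏ s ∈ Finset.Ico (i + 1) (i + 1 + m), f (w s)
        = (∏ s ∈ Finset.Ico (i + 1) (i + m), f (w s)) * f (w (i + m)) := by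
      have : i + 1 + m = (i + m) + 1 := by omega
      rw [this, Finset.prod_Ico_succ_top (by omega : i + 1 ≤ i + m)]
    rw [e1, e2, hwper, mul_comm]

/-- derivative at `t = 0` of the points of a non-multiple periodic
orbit of `q` analytically continued through the family `p_t(z) = q(z) + t z^j`:
`wᵢ'(0) = [Σ_{s<m} w_{i+s}^j Π_{r=s+1}^{m-1} q'(w_{i+r})] / [1 - Π_{s<m} q'(w_{i+s})]`,
orbit indices mod `m` being encoded by `m`-periodicity of `i ↦ wᵢ`. -/
theorem periodic_orbit_derivative (n : ℕ) (hn : 2 ≤ n)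
    (q : Polynomial ℂ) (hq : q.natDegree = n)
    (m : ℕ) (hm : 0 < m) (j : ℕ)
    (w : ℕ → ℂ)
    (hwper : ∀ i, w (i + m) = w i)
    (hwstep : ∀ i, w (i + 1) = q.eval (w i))
    (hwdist : ∀ i i', i < m → i' < m → w i = w i' → i = i')
    (hmult : ∏ s ∈ Finset.range m, q.derivative.eval (w s) ≠ 1)
    (V : Set ℂ) (hV : IsOpen V) (h0V : (0 : ℂ) ∈ V)
    (W : ℕ → ℂ → ℂ)
    (hWanal : ∀ i, ∀ t ∈ V, AnalyticAt ℂ (W i) t)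
    (hWdiff : ∀ i, DifferentiableAt ℂ (W i) 0)
    (hW0 : ∀ i, W i 0 = w i)
    (hWper : ∀ i, ∀ t ∈ V, W (i + m) t = W i t)
    (hWstep : ∀ i, ∀ t ∈ V, W (i + 1) t = q.eval (W i t) + t * (W i t) ^ j) :
    ∀ i, deriv (W i) 0 =
      (∑ s ∈ Finset.range m, (w (i + s)) ^ j *
          ∏ r ∈ Finset.Ico (s + 1) m, q.derivative.eval (w (i + r))) /
        (1 - ∏ s ∈ Finset.range m, q.derivative.eval (w (i + s))) := by
  intro i
  set d : ℕ → ℂ := fun i => deriv (W i) 0 with hd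
  -- the one-step recurrence for the derivatives
  have hrec : ∀ i, d (i + 1) = q.derivative.eval (w i) * d i + (w i) ^ j := by
    intro i
    have hVnhds : V ∈ nhds (0 : ℂ) := hV.mem_nhds h0V
    have heq : W (i + 1) =ᶠ[nhds (0 : ℂ)]
        fun t => q.eval (W i t) + t * (W i t) ^ j := by
      filter_upwards [hVnhds] with t ht using hWstep i t ht
    have hWi : HasDerivAt (W i) (d i) 0 := (hWdiff i).hasDerivAt
    have h1 : HasDerivAt (fun t => q.eval (W i t))
        (q.derivative.eval (W i 0) * d i) 0 :=
      (q.hasDerivAt (W i 0)).comp 0 hWi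
    have h2 : HasDerivAt (fun t : ℂ => t * (W i t) ^ j)
        (1 * (W i 0) ^ j + 0 * (↑j * (W i 0) ^ (j - 1) * d i)) 0 :=
      (hasDerivAt_id 0).mul (hWi.pow j)
    have h3 : HasDerivAt (fun t => q.eval (W i t) + t * (W i t) ^ j)
        (q.derivative.eval (W i 0) * d i + (1 * (W i 0) ^ j +
          0 * (↑j * (W i 0) ^ (j - 1) * d i))) 0 := h1.add h2
    have := h3.deriv
    calc d (i + 1) = deriv (fun t => q.eval (W i t) + t * (W i t) ^ j) 0 :=
          Filter.EventuallyEq.deriv_eq heq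
      _ = q.derivative.eval (w i) * d i + (w i) ^ j := by
          rw [this, hW0]; ring
  -- iterate the recurrence
  have hiter : ∀ k, d (i + k) =
      (∏ s ∈ Finset.range k, q.derivative.eval (w (i + s))) * d i +
      ∑ s ∈ Finset.range k, (w (i + s)) ^ j *
        ∏ r ∈ Finset.Ico (s + 1) k, q.derivative.eval (w (i + r)) := by
    intro k
    induction k with
    | zero => simp
    | succ k ih =>
      have : i + (k + 1) = (i + k) + 1 := by omega
      rw [this, hrec (i + k), ih, Finset.prod_range_succ, Finset.sum_range_succ]
      have hsum : ∀ s ∈ Finset.range k,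
          (w (i + s)) ^ j * ∏ r ∈ Finset.Ico (s + 1) (k + 1), q.derivative.eval (w (i + r))
          = ((w (i + s)) ^ j * ∏ r ∈ Finset.Ico (s + 1) k, q.derivative.eval (w (i + r)))
            * q.derivative.eval (w (i + k)) := by
        intro s hs
        rw [Finset.prod_Ico_succ_top (by
          simp only [Finset.mem_range] at hs; omega : s + 1 ≤ k)]
        ring
      rw [Finset.sum_congr rfl hsum, ← Finset.sum_mul]
      simp only [Finset.Ico_self, Finset.prod_empty, mul_one]
      ring
  -- close the loop
  have hloop := hiter m
  have hdper : d (i + m) = d i := by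
    have : W (i + m) =ᶠ[nhds (0 : ℂ)] W i := by
      filter_upwards [hV.mem_nhds h0V] with t ht using hWper i t ht
    exact Filter.EventuallyEq.deriv_eq this
  rw [hdper] at hloop
  set P := ∏ s ∈ Finset.range m, q.derivative.eval (w (i + s)) with hP
  set S := ∑ s ∈ Finset.range m, (w (i + s)) ^ j *
      ∏ r ∈ Finset.Ico (s + 1) m, q.derivative.eval (w (i + r)) with hS
  have hPne : P ≠ 1 := by
    rw [hP, prod_shift_periodic m w hwper (fun z => q.derivative.eval z) i]
    exact hmult
  have h1P : (1 : ℂ) - P ≠ 0 := sub_ne_zero.mpr (Ne.symm hPne)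
  have hkey : d i * (1 - P) = S := by linear_combination hloop
  show d i = S / (1 - P)
  rw [eq_div_iff h1P]
  exact hkey
end

section
/- Let n ≥ 2, let 0 ≤ j ≤ n-2, let m be a positive integer, and let z_0 ≠ 0 be a periodic point of minimal period m of p_0(z) = z^n; set w_i = z_0^{n^i} for 0 ≤ i ≤ m-1. For t ∈ ℂ set p_t(z) = z^n + t·z^j. Suppose w_0(t), …, w_{m-1}(t) are functions analytic on a neighborhood of 0 in ℂ with w_i(0) = w_i and w_{i+1}(t) = p_t(w_i(t)) for all t (indices mod m). Then for every i, (d/dt)w_i(t)|_{t=0} = [ z_0^{n^i} · Σ_{s=0}^{m-1} n^{m-s-1} · (z_0^{-1})^{n^{s+i}(n-j)} ] / (1 - n^m). -/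
/-- derivative at `t = 0` of the points `wᵢ(t)` of the periodic orbit
`wᵢ = z₀^{nⁱ}` of `p₀(z) = zⁿ` analytically continued through the family
`p_t(z) = zⁿ + t z^j`:
`wᵢ'(0) = z₀^{nⁱ} Σ_{s<m} n^{m-s-1} (z₀⁻¹)^{n^{s+i}(n-j)} / (1 - n^m)`. -/
theorem periodic_orbit_derivative_power_map (n : ℕ) (hn : 2 ≤ n)
    (j : ℕ) (hj : j ≤ n - 2) (m : ℕ) (hm : 0 < m)
    (z₀ : ℂ) (hz₀ : z₀ ≠ 0)
    (hminper : Function.minimalPeriod (fun z : ℂ => z ^ n) z₀ = m)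
    (V : Set ℂ) (hV : IsOpen V) (h0V : (0 : ℂ) ∈ V)
    (W : ℕ → ℂ → ℂ)
    (hWanal : ∀ i, ∀ t ∈ V, AnalyticAt ℂ (W i) t)
    (hW0 : ∀ i, W i 0 = z₀ ^ n ^ i)
    (hWper : ∀ i, ∀ t ∈ V, W (i + m) t = W i t)
    (hWstep : ∀ i, ∀ t ∈ V, W (i + 1) t = (W i t) ^ n + t * (W i t) ^ j) :
    ∀ i, deriv (W i) 0 =
      z₀ ^ n ^ i *
          (∑ s ∈ Finset.range m, (n : ℂ) ^ (m - s - 1) * (z₀⁻¹) ^ (n ^ (s + i) * (n - j))) /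
        (1 - (n : ℂ) ^ m) := by
  have hVnhds : V ∈ nhds (0 : ℂ) := hV.mem_nhds h0V
  -- z₀ ^ n ^ m = z₀
  have hiter : ∀ k, (fun z : ℂ => z ^ n)^[k] z₀ = z₀ ^ n ^ k := by
    intro k
    induction k with
    | zero => simp
    | succ k ih =>
        rw [Function.iterate_succ_apply', ih, ← pow_mul, pow_succ]
  have hz1 : z₀ ^ n ^ m = z₀ := by
    have h := Function.isPeriodicPt_minimalPeriod (fun z : ℂ => z ^ n) z₀
    rw [hminper] at h
    have h' : (fun z : ℂ => z ^ n)^[m] z₀ = z₀ := h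
    rw [hiter m] at h'
    exact h'
  -- the derivative recurrence
  have hdiff : ∀ i, DifferentiableAt ℂ (W i) 0 := fun i =>
    (hWanal i 0 h0V).differentiableAt
  have hDstep : ∀ i, deriv (W (i + 1)) 0 =
      (n : ℂ) * z₀ ^ (n ^ i * (n - 1)) * deriv (W i) 0 + z₀ ^ (n ^ i * j) := by
    intro i
    have heq : W (i + 1) =ᶠ[nhds (0 : ℂ)] fun t => (W i t) ^ n + t * (W i t) ^ j :=
      Filter.eventuallyEq_of_mem hVnhds fun t ht => hWstep i t ht
    have hf : HasDerivAt (W i) (deriv (W i) 0) 0 := (hdiff i).hasDerivAt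
    have h1 : HasDerivAt (fun t => (W i t) ^ n + t * (W i t) ^ j)
        (((n : ℕ) : ℂ) * (W i 0) ^ (n - 1) * deriv (W i) 0 +
          (1 * (W i 0) ^ j + 0 * (((j : ℕ) : ℂ) * (W i 0) ^ (j - 1) * deriv (W i) 0))) 0 :=
      (hf.pow n).add ((hasDerivAt_id 0).mul (hf.pow j))
    rw [heq.deriv_eq, h1.deriv, hW0, ← pow_mul, ← pow_mul]
    ring
  -- main unfolding
  have key : ∀ i k, deriv (W (i + k)) 0 =
      (n : ℂ) ^ k * z₀ ^ n ^ (i + k) * (z₀⁻¹) ^ n ^ i * deriv (W i) 0 +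
        z₀ ^ n ^ (i + k) *
          ∑ s ∈ Finset.range k, (n : ℂ) ^ (k - 1 - s) * (z₀⁻¹) ^ (n ^ (s + i) * (n - j)) := by
    intro i k
    induction k with
    | zero =>
        simp [inv_pow, mul_inv_cancel₀ (pow_ne_zero _ hz₀)]
    | succ k ih =>
        have hstep := hDstep (i + k)
        have hik : i + (k + 1) = (i + k) + 1 := by omega
        rw [hik, hstep, ih, Finset.sum_range_succ]
        set a := n ^ (i + k) with ha
        have e1 : z₀ ^ (a * (n - 1)) * z₀ ^ a = z₀ ^ n ^ (i + (k + 1)) := by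
          rw [← pow_add]
          congr 1
          have h2 : n - 1 + 1 = n := by omega
          have : a * (n - 1) + a = a * n := by
            calc a * (n - 1) + a = a * ((n - 1) + 1) := by ring
              _ = a * n := by rw [h2]
          rw [this, ha, ← pow_succ]
          congr 1
        have e2 : z₀ ^ (a * j) = z₀ ^ n ^ (i + (k + 1)) * (z₀⁻¹) ^ (a * (n - j)) := by
          have hjn : a * j + a * (n - j) = n ^ (i + (k + 1)) := by
            have h3 : j + (n - j) = n := by omega
            calc a * j + a * (n - j) = a * (j + (n - j)) := by ring
              _ = a * n := by rw [h3]
              _ = n ^ (i + (k + 1)) := by rw [ha, ← pow_succ]; congr 1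
          rw [inv_pow, ← hjn, pow_add, mul_assoc, mul_inv_cancel₀ (pow_ne_zero _ hz₀), mul_one]
        have hsum : (n : ℂ) * ∑ s ∈ Finset.range k,
              (n : ℂ) ^ (k - 1 - s) * (z₀⁻¹) ^ (n ^ (s + i) * (n - j)) =
            ∑ s ∈ Finset.range k, (n : ℂ) ^ (k + 1 - 1 - s) * (z₀⁻¹) ^ (n ^ (s + i) * (n - j)) := by
          rw [Finset.mul_sum]
          refine Finset.sum_congr rfl fun s hs => ?_
          rw [← mul_assoc, ← pow_succ']
          congr 2
          have := Finset.mem_range.mp hs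
          omega
        have hlast : (k + 1 - 1 - k) = 0 := by omega
        have hinx : k + i = i + k := by omega
        rw [hlast, hinx]
        calc (n : ℂ) * z₀ ^ (a * (n - 1)) *
              ((n : ℂ) ^ k * z₀ ^ a * (z₀⁻¹) ^ n ^ i * deriv (W i) 0 +
                z₀ ^ a * ∑ s ∈ Finset.range k,
                  (n : ℂ) ^ (k - 1 - s) * (z₀⁻¹) ^ (n ^ (s + i) * (n - j))) + z₀ ^ (a * j)
            = (n : ℂ) ^ (k + 1) * (z₀ ^ (a * (n - 1)) * z₀ ^ a) * (z₀⁻¹) ^ n ^ i * deriv (W i) 0 +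
              (z₀ ^ (a * (n - 1)) * z₀ ^ a) *
                ((n : ℂ) * ∑ s ∈ Finset.range k,
                  (n : ℂ) ^ (k - 1 - s) * (z₀⁻¹) ^ (n ^ (s + i) * (n - j))) + z₀ ^ (a * j) := by
              ring
          _ = (n : ℂ) ^ (k + 1) * z₀ ^ n ^ (i + (k + 1)) * (z₀⁻¹) ^ n ^ i * deriv (W i) 0 +
              z₀ ^ n ^ (i + (k + 1)) *
                (∑ s ∈ Finset.range k,
                  (n : ℂ) ^ (k + 1 - 1 - s) * (z₀⁻¹) ^ (n ^ (s + i) * (n - j)) +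
                 (n : ℂ) ^ 0 * (z₀⁻¹) ^ (a * (n - j))) := by
              rw [e1, hsum, e2]; ring
    -- done with key
  intro i
  -- periodicity of derivatives
  have hper : deriv (W (i + m)) 0 = deriv (W i) 0 := by
    have heq : W (i + m) =ᶠ[nhds (0 : ℂ)] W i :=
      Filter.eventuallyEq_of_mem hVnhds fun t ht => hWper i t ht
    exact heq.deriv_eq
  have hkey := key i m
  rw [hper] at hkey
  -- simplify z₀ ^ n ^ (i + m)
  have hzim : z₀ ^ n ^ (i + m) = z₀ ^ n ^ i := by
    have : n ^ (i + m) = n ^ m * n ^ i := by rw [pow_add]; ring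
    rw [this, pow_mul, hz1]
  rw [hzim] at hkey
  have hcancel : z₀ ^ n ^ i * (z₀⁻¹) ^ n ^ i = 1 := by
    rw [inv_pow, mul_inv_cancel₀ (pow_ne_zero _ hz₀)]
  -- solve the linear equation
  have hnm1 : (1 : ℂ) - (n : ℂ) ^ m ≠ 0 := by
    intro h
    have h1 : ((n : ℂ)) ^ m = 1 := by linear_combination -h
    have h2 : ((n ^ m : ℕ) : ℂ) = ((1 : ℕ) : ℂ) := by push_cast; exact h1
    have h3 : n ^ m = 1 := Nat.cast_injective h2
    have h4 : 2 ≤ n ^ m := le_trans hn (Nat.le_self_pow hm.ne' n)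
    omega
  have hS : ∀ s, m - 1 - s = m - s - 1 := fun s => by omega
  have hsum_eq : (∑ s ∈ Finset.range m, (n : ℂ) ^ (m - 1 - s) * (z₀⁻¹) ^ (n ^ (s + i) * (n - j)))
      = ∑ s ∈ Finset.range m, (n : ℂ) ^ (m - s - 1) * (z₀⁻¹) ^ (n ^ (s + i) * (n - j)) := by
    refine Finset.sum_congr rfl fun s _ => by rw [hS s]
  rw [hsum_eq] at hkey
  rw [eq_div_iff hnm1]
  have hkey' : deriv (W i) 0 * (1 - (n : ℂ) ^ m) =
      z₀ ^ n ^ i * ∑ s ∈ Finset.range m, (n : ℂ) ^ (m - s - 1) * (z₀⁻¹) ^ (n ^ (s + i) * (n - j)) := by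
    have : deriv (W i) 0 - (n : ℂ) ^ m * (z₀ ^ n ^ i * (z₀⁻¹) ^ n ^ i) * deriv (W i) 0 =
        z₀ ^ n ^ i * ∑ s ∈ Finset.range m, (n : ℂ) ^ (m - s - 1) * (z₀⁻¹) ^ (n ^ (s + i) * (n - j)) := by
      linear_combination hkey
    rw [hcancel] at this
    linear_combination this
  linear_combination hkey'
end

section
/- Let n ≥ 2 and let m be a positive integer. Then the set of complex numbers c for which the m-th iterate of the polynomial f_c(z) = z^n + c has a multiple fixed point — that is, the set { c ∈ ℂ : ∃ z ∈ ℂ, f_c^{∘m}(z) = z and (f_c^{∘m})'(z) = 1 } — is finite. -/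
open Polynomial Matrix

noncomputable section MFPaux

/-- The `m`-th iterate of `z ↦ zⁿ + c` as a polynomial in `z` (outer variable)
with coefficients polynomials in `c` (inner variable). -/
private def itPoly (n : ℕ) : ℕ → Polynomial (Polynomial ℂ)
  | 0 => X
  | (m + 1) => (itPoly n m) ^ n + C X

private lemma itPoly_eval (n : ℕ) (c z : ℂ) :
    ∀ m, ((itPoly n m).map (evalRingHom c)).eval z = (fun w : ℂ => w ^ n + c)^[m] z
  | 0 => by simp [itPoly]
  | (m + 1) => by
      rw [Function.iterate_succ_apply']
      simp [itPoly, Polynomial.map_add, Polynomial.map_pow, itPoly_eval n c z m]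

private lemma itPoly_monic (n : ℕ) (hn : 2 ≤ n) :
    ∀ m, (itPoly n m).Monic ∧ (itPoly n m).degree = (n ^ m : ℕ)
  | 0 => by simp [itPoly, monic_X]
  | (m + 1) => by
      obtain ⟨h1, h2⟩ := itPoly_monic n hn m
      have hpow : ((itPoly n m) ^ n).degree = ((n ^ (m + 1) : ℕ) : WithBot ℕ) := by
        rw [degree_pow, h2, pow_succ]
        push_cast
        ring
      have hmon : ((itPoly n m) ^ n).Monic := h1.pow n
      have hlt : (C (X : Polynomial ℂ)).degree < ((itPoly n m) ^ n).degree := by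
        rw [hpow]
        refine lt_of_le_of_lt degree_C_le ?_
        exact_mod_cast pow_pos (show 0 < n by omega) (m + 1)
      constructor
      · exact hmon.add_of_left hlt
      · rw [show itPoly n (m+1) = (itPoly n m) ^ n + C X from rfl,
          degree_add_eq_left_of_degree_lt hlt, hpow]

private lemma itPoly_map_zero (n : ℕ) :
    ∀ m, (itPoly n m).map (evalRingHom (0 : ℂ)) = X ^ n ^ m
  | 0 => by simp [itPoly]
  | (m + 1) => by
      simp only [itPoly, Polynomial.map_add, Polynomial.map_pow, Polynomial.map_C,
        itPoly_map_zero n m]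
      simp [← pow_mul, pow_succ]

/-- Coprimality of `X^N - X` and its derivative over `ℂ`. -/
private lemma coprime_aux {N : ℕ} (hN : 2 ≤ N) :
    IsCoprime (X ^ N - X : Polynomial ℂ) (C (N : ℂ) * X ^ (N - 1) - 1) := by
  obtain ⟨K, rfl⟩ : ∃ K, N = K + 2 := ⟨N - 2, by omega⟩
  have hsep : (X ^ (K + 2) - X : Polynomial ℂ).Separable := by
    have h1 : (X : Polynomial ℂ).Separable := separable_X
    have h2 : ((X : Polynomial ℂ) ^ (K + 1) - C 1).Separable := by
      refine separable_X_pow_sub_C 1 ?_ one_ne_zero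
      have : ((K : ℂ) + 1) ≠ 0 := by
        intro h
        have := congrArg Complex.re h
        simp at this
        exact absurd this (by positivity)
      push_cast
      exact this
    have h3 : IsCoprime (X : Polynomial ℂ) (X ^ (K + 1) - C 1) :=
      ⟨X ^ K, -1, by rw [C_1]; ring⟩
    have hmul := h1.mul h2 h3
    have hfact : (X : Polynomial ℂ) * (X ^ (K + 1) - C 1) = X ^ (K + 2) - X := by
      rw [C_1]; ring
    rwa [hfact] at hmul
  have hder : derivative (X ^ (K + 2) - X : Polynomial ℂ)
      = C (((K + 2 : ℕ) : ℂ)) * X ^ (K + 2 - 1) - 1 := by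
    rw [derivative_sub, derivative_X_pow, derivative_X]
  rw [Polynomial.Separable, hder] at hsep
  exact hsep

/-- `%ₘ` commutes with the relevant linear combinations. -/
private lemma mod_sum {S : Type*} [CommRing S] (P : Polynomial S)
    (Q : Polynomial S) {N : ℕ} (v : Fin N → S) :
    (Q * ∑ j : Fin N, C (v j) * X ^ (j : ℕ)) %ₘ P
      = ∑ j : Fin N, C (v j) * ((Q * X ^ (j : ℕ)) %ₘ P) := by
  have key : ∀ (a : S) (p : Polynomial S), (C a * p) %ₘ P = C a * (p %ₘ P) := by
    intro a p
    rw [← smul_eq_C_mul, ← smul_eq_C_mul, smul_modByMonic]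
  rw [Finset.mul_sum]
  have hcomm : ∀ j : Fin N, Q * (C (v j) * X ^ (j : ℕ)) = C (v j) * (Q * X ^ (j : ℕ)) := by
    intro j; ring
  simp_rw [hcomm]
  have hms : (∑ j : Fin N, C (v j) * (Q * X ^ (j : ℕ))) %ₘ P
      = ∑ j : Fin N, (C (v j) * (Q * X ^ (j : ℕ))) %ₘ P :=
    map_sum (modByMonicHom P) (fun j => C (v j) * (Q * X ^ (j : ℕ))) Finset.univ
  rw [hms]
  simp_rw [key]

private lemma coeff_sum_basis {S : Type*} [CommRing S] {N : ℕ} (v : Fin N → S) (j₀ : Fin N) :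
    (∑ j : Fin N, C (v j) * X ^ (j : ℕ)).coeff (j₀ : ℕ) = v j₀ := by
  rw [finset_sum_coeff]
  rw [Finset.sum_eq_single j₀]
  · simp [coeff_C_mul, coeff_X_pow]
  · intro j _ hj
    simp only [coeff_C_mul, coeff_X_pow]
    rw [if_neg (by exact fun h => hj (Fin.ext h.symm))]
    ring
  · simp

private lemma degree_sum_basis_lt {S : Type*} [CommRing S] [Nontrivial S] {N : ℕ}
    (v : Fin N → S) :
    (∑ j : Fin N, C (v j) * X ^ (j : ℕ)).degree < (N : WithBot ℕ) := by
  refine lt_of_le_of_lt (degree_sum_le _ _) ?_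
  rw [Finset.sup_lt_iff (by exact_mod_cast WithBot.bot_lt_coe N)]
  intro j _
  refine lt_of_le_of_lt (degree_C_mul_X_pow_le _ _) ?_
  exact_mod_cast j.isLt

private lemma det_ne_zero {K : Type*} [Field K] {P Q : Polynomial K} (hP : P.Monic)
    {N : ℕ} (hdeg : P.degree = (N : WithBot ℕ)) (hcop : IsCoprime P Q) :
    (Matrix.of fun i j : Fin N => ((Q * X ^ (j : ℕ)) %ₘ P).coeff i).det ≠ 0 := by
  classical
  intro h
  obtain ⟨v, hv, hMv⟩ := Matrix.exists_mulVec_eq_zero_iff.mpr h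
  set u : Polynomial K := ∑ j : Fin N, C (v j) * X ^ (j : ℕ) with hu
  have hu0 : u ≠ 0 := by
    obtain ⟨j₀, hj₀⟩ := Function.ne_iff.mp hv
    intro h0
    apply hj₀
    have hc := coeff_sum_basis v j₀
    rw [← hu, h0] at hc
    simpa using hc.symm
  have hmod : (Q * u) %ₘ P = 0 := by
    rw [hu, mod_sum P Q v]
    ext k
    rw [finset_sum_coeff, coeff_zero]
    by_cases hk : k < N
    · have hrow := congrFun hMv ⟨k, hk⟩
      have hL : ∑ j : Fin N, (C (v j) * ((Q * X ^ (j : ℕ)) %ₘ P)).coeff k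
          = ((Matrix.of fun i j : Fin N => ((Q * X ^ (j : ℕ)) %ₘ P).coeff i) *ᵥ v) ⟨k, hk⟩ := by
        simp_rw [coeff_C_mul]
        simp [Matrix.mulVec, dotProduct, mul_comm]
      rw [hL, hMv]
      rfl
    · refine Finset.sum_eq_zero fun j _ => ?_
      rw [coeff_C_mul, coeff_eq_zero_of_degree_lt, mul_zero]
      exact lt_of_lt_of_le ((degree_modByMonic_lt _ hP).trans_eq hdeg)
        (by exact_mod_cast Nat.le_of_not_lt hk)
  have hdvd : P ∣ Q * u := (modByMonic_eq_zero_iff_dvd hP).mp hmod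
  have hPu : P ∣ u := hcop.dvd_of_dvd_mul_left hdvd
  exact hu0 (eq_zero_of_dvd_of_degree_lt hPu (hdeg ▸ degree_sum_basis_lt v))

private lemma exists_bezout {S : Type*} [CommRing S] [Nontrivial S] {P : Polynomial S}
    (hP : P.Monic) (Q : Polynomial S) {N : ℕ} (hN : 0 < N)
    (hdeg : P.degree = (N : WithBot ℕ)) :
    ∃ s t : Polynomial S,
      C (Matrix.of fun i j : Fin N => ((Q * X ^ (j : ℕ)) %ₘ P).coeff i).det
        = s * P + t * Q := by
  classical
  set M := Matrix.of fun i j : Fin N => ((Q * X ^ (j : ℕ)) %ₘ P).coeff i with hM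
  set e : Fin N → S := Pi.single ⟨0, hN⟩ 1 with he
  set w : Fin N → S := (M.adjugate) *ᵥ e with hw
  have hMw : M *ᵥ w = M.det • e := by
    rw [hw, Matrix.mulVec_mulVec, Matrix.mul_adjugate, Matrix.smul_mulVec,
      Matrix.one_mulVec]
  set u : Polynomial S := ∑ j : Fin N, C (w j) * X ^ (j : ℕ) with hu
  have hg : (Q * u) %ₘ P = C M.det := by
    rw [hu, mod_sum P Q w]
    ext k
    rw [finset_sum_coeff, coeff_C]
    by_cases hk : k < N
    · have hL : ∑ j : Fin N, (C (w j) * ((Q * X ^ (j : ℕ)) %ₘ P)).coeff k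
          = (M *ᵥ w) ⟨k, hk⟩ := by
        simp_rw [coeff_C_mul]
        simp [hM, Matrix.mulVec, dotProduct, mul_comm]
      rw [hL, hMw]
      by_cases h0 : k = 0
      · subst h0
        simp [he, Pi.single_apply]
      · simp [he, Pi.single_apply, Fin.ext_iff, h0]
    · rw [if_neg (by omega)]
      refine Finset.sum_eq_zero fun j _ => ?_
      rw [coeff_C_mul, coeff_eq_zero_of_degree_lt, mul_zero]
      exact lt_of_lt_of_le ((degree_modByMonic_lt _ hP).trans_eq hdeg)
        (by exact_mod_cast Nat.le_of_not_lt hk)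
  refine ⟨-((Q * u) /ₘ P), u, ?_⟩
  have hdiv := modByMonic_add_div (Q * u) P
  rw [hg] at hdiv
  linear_combination hdiv

end MFPaux

/-- the set of parameters `c` for which the `m`-th iterate of
`f_c(z) = zⁿ + c` has a multiple fixed point is finite. -/
theorem finite_parameters_with_multiple_fixed_point (n m : ℕ) (hn : 2 ≤ n) (hm : 0 < m) :
    {c : ℂ | ∃ z : ℂ, (fun w : ℂ => w ^ n + c)^[m] z = z ∧
      deriv ((fun w : ℂ => w ^ n + c)^[m]) z = 1}.Finite := by
  classical
  set N : ℕ := n ^ m with hNdef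
  have hN2 : 2 ≤ N := le_trans hn (Nat.le_self_pow (by omega) n)
  have hN0 : 0 < N := by omega
  obtain ⟨hFmon, hFdeg⟩ := itPoly_monic n hn m
  set F : Polynomial (Polynomial ℂ) := itPoly n m with hF
  set P : Polynomial (Polynomial ℂ) := F - X with hPdef
  set Q : Polynomial (Polynomial ℂ) := derivative F - 1 with hQdef
  have hXF : (X : Polynomial (Polynomial ℂ)).degree < F.degree := by
    rw [degree_X, hFdeg]
    exact_mod_cast show (1 : ℕ) < N by omega
  have hPmon : P.Monic := hFmon.sub_of_left hXF
  have hPdeg : P.degree = (N : WithBot ℕ) := by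
    rw [hPdef, degree_sub_eq_left_of_degree_lt hXF, hFdeg]
  have hmapP : P.map (evalRingHom (0 : ℂ)) = X ^ N - X := by
    rw [hPdef, Polynomial.map_sub, Polynomial.map_X, hF, itPoly_map_zero n m]
  have hmapQ : Q.map (evalRingHom (0 : ℂ)) = C ((N : ℕ) : ℂ) * X ^ (N - 1) - 1 := by
    rw [hQdef, Polynomial.map_sub, Polynomial.map_one, ← derivative_map, hF,
      itPoly_map_zero n m, derivative_X_pow]
  set Mx := Matrix.of fun i j : Fin N => ((Q * X ^ (j : ℕ)) %ₘ P).coeff i with hMx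
  set d : Polynomial ℂ := Mx.det with hd
  have hmapMx : Mx.map (evalRingHom (0 : ℂ)) = Matrix.of fun i j : Fin N =>
      (((Q.map (evalRingHom (0 : ℂ))) * X ^ (j : ℕ)) %ₘ (P.map (evalRingHom (0 : ℂ)))).coeff i := by
    ext i j
    rw [hMx]
    simp only [Matrix.map_apply, Matrix.of_apply]
    rw [← coeff_map, Polynomial.map_modByMonic _ hPmon, Polynomial.map_mul,
      Polynomial.map_pow, Polynomial.map_X]
  have hP0mon : (X ^ N - X : Polynomial ℂ).Monic := by
    have := hPmon.map (evalRingHom (0 : ℂ))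
    rwa [hmapP] at this
  have hP0deg : (X ^ N - X : Polynomial ℂ).degree = (N : WithBot ℕ) := by
    have h1 : (X : Polynomial ℂ).degree < (X ^ N : Polynomial ℂ).degree := by
      rw [degree_X, degree_X_pow]
      exact_mod_cast show (1 : ℕ) < N by omega
    rw [degree_sub_eq_left_of_degree_lt h1, degree_X_pow]
  have hd0 : d ≠ 0 := by
    intro h0
    have hev : (evalRingHom (0 : ℂ)) d = 0 := by rw [h0]; simp
    rw [hd, RingHom.map_det, RingHom.mapMatrix_apply, hmapMx, hmapP, hmapQ] at hev
    exact det_ne_zero hP0mon hP0deg (coprime_aux hN2) hev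
  obtain ⟨s, t, hst⟩ := exists_bezout hPmon Q hN0 hPdeg
  rw [← hMx, ← hd] at hst
  refine Set.Finite.subset (Polynomial.finite_setOf_isRoot hd0) ?_
  rintro c ⟨z, h1, h2⟩
  have hiter : ∀ w : ℂ, (fun w : ℂ => w ^ n + c)^[m] w = (F.map (evalRingHom c)).eval w :=
    fun w => (itPoly_eval n c w m).symm
  set φ : Polynomial (Polynomial ℂ) →+* ℂ :=
    (evalRingHom z).comp (mapRingHom (evalRingHom c)) with hφ
  have hφF : φ F = z := by
    have := hiter z
    rw [h1] at this
    simpa [hφ] using this.symm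
  have hφP : φ P = 0 := by
    rw [hPdef, _root_.map_sub, hφF]
    simp [hφ]
  have hφQ : φ Q = 0 := by
    have hderiv : deriv ((fun w : ℂ => w ^ n + c)^[m]) z
        = ((F.map (evalRingHom c)).derivative).eval z := by
      have hfun : (fun w : ℂ => w ^ n + c)^[m] = fun w => (F.map (evalRingHom c)).eval w :=
        funext hiter
      rw [hfun, Polynomial.deriv]
    have hφdF : φ (derivative F) = 1 := by
      have : φ (derivative F) = ((derivative F).map (evalRingHom c)).eval z := by
        simp [hφ]
      rw [this, ← derivative_map, ← hderiv, h2]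
    rw [hQdef, _root_.map_sub, hφdF, _root_.map_one, sub_self]
  have hcd := congrArg φ hst
  rw [_root_.map_add, _root_.map_mul, _root_.map_mul, hφP, hφQ, mul_zero, mul_zero, add_zero] at hcd
  have hCd : φ (C d) = d.eval c := by
    simp [hφ]
  show d.IsRoot c
  rw [Polynomial.IsRoot, ← hCd, hcd]
end
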